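/- Rate double robustness: if for each sample size n the nuisance estimates satisfy (E[(g - ĥⁿᵏ)²])^{1/2}·(E[(Qᵏ - Q̂ⁿᵏ)²])^{1/2} = o(n^{-1/2}) for k = 0,1 and ĥⁿᵏ ∈ [c₁, 1-c₂] for constants c₁, c₂ > 0, then √n·R(P, P̂ₙ) → 0 as n → ∞. -/

import Mathlib

open MeasureTheory Filter Asymptotics

lemma cs_abs {Ω : Type*} {mΩ : MeasurableSpace Ω} {μ : Measure Ω}
    {f q : Ω → ℝ} (hf : MemLp f 2 μ) (hq : MemLp q 2 μ) :
    ∫ ω, |f ω| * |q ω| ∂μ ≤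
      Real.sqrt (∫ ω, f ω ^ 2 ∂μ) * Real.sqrt (∫ ω, q ω ^ 2 ∂μ) := by
  have h22 : (2 : ℝ).HolderConjugate 2 := Real.HolderConjugate.two_two
  have h2 : ENNReal.ofReal (2:ℝ) = 2 := by norm_num
  have key := integral_mul_le_Lp_mul_Lq_of_nonneg (μ := μ) h22
    (f := fun ω => |f ω|) (g := fun ω => |q ω|)
    (Eventually.of_forall fun ω => abs_nonneg _)
    (Eventually.of_forall fun ω => abs_nonneg _)
    (by rw [h2]; simpa [Real.norm_eq_abs] using hf.norm)
    (by rw [h2]; simpa [Real.norm_eq_abs] using hq.norm)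
  have e1 : ∫ ω, |f ω| ^ (2:ℝ) ∂μ = ∫ ω, f ω ^ 2 ∂μ := by
    refine integral_congr_ae (Eventually.of_forall fun ω => ?_)
    rw [show ((2:ℝ)) = ((2:ℕ):ℝ) by norm_num]
    simp [Real.rpow_natCast, sq_abs]
  have e2 : ∫ ω, |q ω| ^ (2:ℝ) ∂μ = ∫ ω, q ω ^ 2 ∂μ := by
    refine integral_congr_ae (Eventually.of_forall fun ω => ?_)
    rw [show ((2:ℝ)) = ((2:ℕ):ℝ) by norm_num]
    simp [Real.rpow_natCast, sq_abs]
  rw [e1, e2] at key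
  calc ∫ ω, |f ω| * |q ω| ∂μ
      ≤ (∫ ω, f ω ^ 2 ∂μ) ^ ((1:ℝ)/2) * (∫ ω, q ω ^ 2 ∂μ) ^ ((1:ℝ)/2) := key
    _ = Real.sqrt (∫ ω, f ω ^ 2 ∂μ) * Real.sqrt (∫ ω, q ω ^ 2 ∂μ) := by
        rw [Real.sqrt_eq_rpow, Real.sqrt_eq_rpow]

lemma term_bound {Ω β : Type*} [MeasurableSpace β] {mΩ : MeasurableSpace Ω}
    {μ : Measure Ω} [IsProbabilityMeasure μ]
    (W : Ω → β) (hW : Measurable W) (g h q : β → ℝ)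
    (hg : Measurable g) (hh : Measurable h)
    (hg0 : ∀ b, 0 ≤ g b) (hg1 : ∀ b, g b ≤ 1)
    (c1 : ℝ) (hc1 : 0 < c1) (hhb : ∀ b, c1 ≤ h b) (hhb1 : ∀ b, h b ≤ 1)
    (hL2 : MemLp (fun ω => q (W ω)) 2 μ) :
    |∫ ω, (g (W ω) / h (W ω) - 1) * q (W ω) ∂μ| ≤
      c1⁻¹ * (Real.sqrt (∫ ω, (g (W ω) - h (W ω)) ^ 2 ∂μ)
        * Real.sqrt (∫ ω, q (W ω) ^ 2 ∂μ)) := by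
  have hfm : Measurable fun ω => g (W ω) - h (W ω) := (hg.sub hh).comp hW
  have hfbd : ∀ ω, |g (W ω) - h (W ω)| ≤ 1 := fun ω => by
    have h1 := hg0 (W ω); have h2 := hg1 (W ω)
    have h3 := hhb (W ω); have h4 := hhb1 (W ω)
    rw [abs_le]; constructor <;> nlinarith
  have hfL2 : MemLp (fun ω => g (W ω) - h (W ω)) 2 μ :=
    MemLp.of_bound hfm.aestronglyMeasurable 1
      (Eventually.of_forall fun ω => by simpa [Real.norm_eq_abs] using hfbd ω)
  have hqint : Integrable (fun ω => |q (W ω)|) μ := (hL2.integrable one_le_two).abs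
  have hint : Integrable (fun ω => |g (W ω) - h (W ω)| * |q (W ω)|) μ :=
    hqint.bdd_mul hfm.abs.aestronglyMeasurable
      (c := 1) (Eventually.of_forall fun ω => by simpa [Real.norm_eq_abs, abs_abs] using hfbd ω)
  have hpt : ∀ ω, |g (W ω) / h (W ω) - 1| * |q (W ω)| ≤
      c1⁻¹ * (|g (W ω) - h (W ω)| * |q (W ω)|) := by
    intro ω
    have hhpos : 0 < h (W ω) := lt_of_lt_of_le hc1 (hhb (W ω))
    have : g (W ω) / h (W ω) - 1 = (g (W ω) - h (W ω)) / h (W ω) := by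
      field_simp
    rw [this, abs_div, abs_of_pos hhpos, div_mul_eq_mul_div,
      div_le_iff₀ hhpos]
    have h1 : |g (W ω) - h (W ω)| * |q (W ω)| ≤
        c1⁻¹ * (|g (W ω) - h (W ω)| * |q (W ω)|) * c1 := by
      rw [mul_comm _ c1, ← mul_assoc, mul_inv_cancel₀ hc1.ne', one_mul]
    refine h1.trans ?_
    have hnn : 0 ≤ c1⁻¹ * (|g (W ω) - h (W ω)| * |q (W ω)|) := by positivity
    exact mul_le_mul_of_nonneg_left (hhb (W ω)) hnn
  calc |∫ ω, (g (W ω) / h (W ω) - 1) * q (W ω) ∂μ|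
      ≤ ∫ ω, |g (W ω) / h (W ω) - 1| * |q (W ω)| ∂μ := by
        simpa [Real.norm_eq_abs] using
          norm_integral_le_integral_norm (fun ω => (g (W ω) / h (W ω) - 1) * q (W ω)) (μ := μ)
    _ ≤ ∫ ω, c1⁻¹ * (|g (W ω) - h (W ω)| * |q (W ω)|) ∂μ := by
        refine integral_mono_of_nonneg (Eventually.of_forall fun ω => by positivity)
          (hint.const_mul _) (Eventually.of_forall fun ω => hpt ω)
    _ = c1⁻¹ * ∫ ω, |g (W ω) - h (W ω)| * |q (W ω)| ∂μ := integral_const_mul _ _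
    _ ≤ c1⁻¹ * (Real.sqrt (∫ ω, (g (W ω) - h (W ω)) ^ 2 ∂μ)
        * Real.sqrt (∫ ω, q (W ω) ^ 2 ∂μ)) := by
        exact mul_le_mul_of_nonneg_left (cs_abs hfL2 hL2) (by positivity)

/-- Rate double robustness: if √E[(g-ĥₙ¹)²]·√E[(Q¹-Q̂ₙ¹)²] = o(n^{-1/2}) and
√E[((1-g)-ĥₙ⁰)²]·√E[(Q⁰-Q̂ₙ⁰)²] = o(n^{-1/2}), with ĥₙᵏ ∈ [c₁, 1-c₂], then
√n·R(P, P̂ₙ) → 0, where R(P, P̂ₙ) = E[(g/ĥₙ¹-1)(Q¹-Q̂ₙ¹)] + E[((1-g)/ĥₙ⁰-1)(Q⁰-Q̂ₙ⁰)]. -/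
theorem stmt_9 {Ω β : Type*} [MeasurableSpace β]
    {mΩ : MeasurableSpace Ω} {μ : Measure Ω} [IsProbabilityMeasure μ]
    (W : Ω → β) (hW : Measurable W)
    (g : β → ℝ) (hg : Measurable g) (hg01 : ∀ b, 0 ≤ g b ∧ g b ≤ 1)
    (Q1 Q0 : β → ℝ) (hQ1 : Measurable Q1) (hQ0 : Measurable Q0)
    (h1 h0 Qh1 Qh0 : ℕ → β → ℝ)
    (hh1 : ∀ n, Measurable (h1 n)) (hh0 : ∀ n, Measurable (h0 n))
    (hQh1 : ∀ n, Measurable (Qh1 n)) (hQh0 : ∀ n, Measurable (Qh0 n))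
    (c1 c2 : ℝ) (hc1 : 0 < c1) (hc2 : 0 < c2)
    (hbdd1 : ∀ n b, c1 ≤ h1 n b ∧ h1 n b ≤ 1 - c2)
    (hbdd0 : ∀ n b, c1 ≤ h0 n b ∧ h0 n b ≤ 1 - c2)
    (hL2Q1 : ∀ n, MemLp (fun ω => Q1 (W ω) - Qh1 n (W ω)) 2 μ)
    (hL2Q0 : ∀ n, MemLp (fun ω => Q0 (W ω) - Qh0 n (W ω)) 2 μ)
    (hrate1 : (fun n : ℕ => Real.sqrt (∫ ω, (g (W ω) - h1 n (W ω)) ^ 2 ∂μ)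
        * Real.sqrt (∫ ω, (Q1 (W ω) - Qh1 n (W ω)) ^ 2 ∂μ))
      =o[atTop] fun n : ℕ => (n : ℝ) ^ (-(1 : ℝ) / 2))
    (hrate0 : (fun n : ℕ => Real.sqrt (∫ ω, ((1 - g (W ω)) - h0 n (W ω)) ^ 2 ∂μ)
        * Real.sqrt (∫ ω, (Q0 (W ω) - Qh0 n (W ω)) ^ 2 ∂μ))
      =o[atTop] fun n : ℕ => (n : ℝ) ^ (-(1 : ℝ) / 2)) :
    Tendsto (fun n : ℕ => Real.sqrt n *
        ((∫ ω, (g (W ω) / h1 n (W ω) - 1) * (Q1 (W ω) - Qh1 n (W ω)) ∂μ)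
          + ∫ ω, ((1 - g (W ω)) / h0 n (W ω) - 1) * (Q0 (W ω) - Qh0 n (W ω)) ∂μ))
      atTop (nhds 0) := by
  set r1 : ℕ → ℝ := fun n => Real.sqrt (∫ ω, (g (W ω) - h1 n (W ω)) ^ 2 ∂μ)
        * Real.sqrt (∫ ω, (Q1 (W ω) - Qh1 n (W ω)) ^ 2 ∂μ) with hr1
  set r0 : ℕ → ℝ := fun n => Real.sqrt (∫ ω, ((1 - g (W ω)) - h0 n (W ω)) ^ 2 ∂μ)
        * Real.sqrt (∫ ω, (Q0 (W ω) - Qh0 n (W ω)) ^ 2 ∂μ) with hr0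
  set S : ℕ → ℝ := fun n =>
    (∫ ω, (g (W ω) / h1 n (W ω) - 1) * (Q1 (W ω) - Qh1 n (W ω)) ∂μ)
      + ∫ ω, ((1 - g (W ω)) / h0 n (W ω) - 1) * (Q0 (W ω) - Qh0 n (W ω)) ∂μ with hS
  have hb1 : ∀ n, |∫ ω, (g (W ω) / h1 n (W ω) - 1) * (Q1 (W ω) - Qh1 n (W ω)) ∂μ|
      ≤ c1⁻¹ * r1 n := fun n => by
    have := term_bound W hW g (h1 n) (fun b => Q1 b - Qh1 n b) hg (hh1 n)
      (fun b => (hg01 b).1) (fun b => (hg01 b).2) c1 hc1 (fun b => (hbdd1 n b).1)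
      (fun b => le_trans (hbdd1 n b).2 (by linarith)) (hL2Q1 n)
    simpa [hr1] using this
  have hb0 : ∀ n, |∫ ω, ((1 - g (W ω)) / h0 n (W ω) - 1) * (Q0 (W ω) - Qh0 n (W ω)) ∂μ|
      ≤ c1⁻¹ * r0 n := fun n => by
    have := term_bound W hW (fun b => 1 - g b) (h0 n) (fun b => Q0 b - Qh0 n b)
      (measurable_const.sub hg) (hh0 n)
      (fun b => by show (0:ℝ) ≤ 1 - g b; linarith [(hg01 b).2])
      (fun b => by show (1:ℝ) - g b ≤ 1; linarith [(hg01 b).1])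
      c1 hc1 (fun b => (hbdd0 n b).1)
      (fun b => le_trans (hbdd0 n b).2 (by linarith)) (hL2Q0 n)
    simpa [hr0] using this
  have hr1nn : ∀ n, 0 ≤ r1 n := fun n => mul_nonneg (Real.sqrt_nonneg _) (Real.sqrt_nonneg _)
  have hr0nn : ∀ n, 0 ≤ r0 n := fun n => mul_nonneg (Real.sqrt_nonneg _) (Real.sqrt_nonneg _)
  have hO : S =O[atTop] fun n => r1 n + r0 n := by
    refine IsBigO.of_bound c1⁻¹ (Eventually.of_forall fun n => ?_)
    have h1' := hb1 n; have h0' := hb0 n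
    have : ‖S n‖ ≤ c1⁻¹ * (r1 n + r0 n) := by
      calc ‖S n‖ ≤ |∫ ω, (g (W ω) / h1 n (W ω) - 1) * (Q1 (W ω) - Qh1 n (W ω)) ∂μ|
            + |∫ ω, ((1 - g (W ω)) / h0 n (W ω) - 1) * (Q0 (W ω) - Qh0 n (W ω)) ∂μ| :=
          abs_add_le _ _
        _ ≤ c1⁻¹ * (r1 n + r0 n) := by rw [mul_add]; exact add_le_add h1' h0'
    calc ‖S n‖ ≤ c1⁻¹ * (r1 n + r0 n) := this
      _ ≤ c1⁻¹ * ‖r1 n + r0 n‖ := by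
          apply mul_le_mul_of_nonneg_left (le_abs_self _) (by positivity)
  have ho : S =o[atTop] fun n : ℕ => (n : ℝ) ^ (-(1 : ℝ) / 2) :=
    hO.trans_isLittleO (hrate1.add hrate0)
  have ho2 : (fun n : ℕ => Real.sqrt n * S n)
      =o[atTop] fun n : ℕ => Real.sqrt n * (n : ℝ) ^ (-(1 : ℝ) / 2) :=
    (isBigO_refl (fun n : ℕ => Real.sqrt n) atTop).mul_isLittleO ho
  have heq : (fun n : ℕ => Real.sqrt n * (n : ℝ) ^ (-(1 : ℝ) / 2)) =ᶠ[atTop]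
      fun _ => (1 : ℝ) := by
    filter_upwards [eventually_ge_atTop 1] with n hn
    have hnpos : (0 : ℝ) < n := by exact_mod_cast Nat.lt_of_lt_of_le Nat.zero_lt_one hn
    rw [Real.sqrt_eq_rpow, ← Real.rpow_add hnpos]
    norm_num
  have ho3 : (fun n : ℕ => Real.sqrt n * S n) =o[atTop] fun _ : ℕ => (1 : ℝ) :=
    ho2.congr' EventuallyEq.rfl heq
  exact isLittleO_one_iff ℝ |>.mp ho3
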